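/- arXiv:0904.4083 — 2 statements merged into one kernel-verified Lean document; each statement's English description precedes it below -/
import Mathlib

section
/- Let a and b be vectors in Euclidean space ℝ³ with ‖b‖ = 1 and ‖a‖ ≤ 1. Then h₂((1+‖a‖)/2) ≤ h₂((1+⟨b,a⟩)/2), and equality holds if and only if a is a scalar multiple of b. -/
open scoped RealInnerProductSpace

/-- Binary entropy function (base-2 logarithm), with the convention `0 * log 0 = 0`. -/
noncomputable def h2 (p : ℝ) : ℝ := -(p * Real.logb 2 p) - (1 - p) * Real.logb 2 (1 - p)

lemma h2_eq (p : ℝ) : h2 p = Real.binEntropy p / Real.log 2 := by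
  simp only [h2, Real.binEntropy, Real.logb, Real.log_inv]
  ring

lemma binEntropy_sym (x : ℝ) :
    Real.binEntropy ((1 + x) / 2) = Real.binEntropy ((1 + |x|) / 2) := by
  rcases abs_cases x with ⟨h, _⟩ | ⟨h, _⟩
  · rw [h]
  · rw [h, show (1 + -x) / 2 = 1 - (1 + x) / 2 by ring, Real.binEntropy_one_sub]

lemma key (x y : ℝ) (hxy : |x| ≤ y) (hy : y ≤ 1) :
    Real.binEntropy ((1 + y) / 2) ≤ Real.binEntropy ((1 + x) / 2) ∧
    (Real.binEntropy ((1 + y) / 2) = Real.binEntropy ((1 + x) / 2) ↔ |x| = y) := by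
  rw [binEntropy_sym x]
  have hx0 : (0:ℝ) ≤ |x| := abs_nonneg x
  have hmem : ∀ z : ℝ, 0 ≤ z → z ≤ 1 → (1 + z) / 2 ∈ Set.Icc (2⁻¹ : ℝ) 1 := by
    intro z h0 h1; constructor <;> [linarith; linarith]
  have m1 := hmem _ hx0 (hxy.trans hy)
  have m2 := hmem _ (hx0.trans hxy) hy
  constructor
  · rcases eq_or_lt_of_le hxy with h | h
    · rw [h]
    · exact le_of_lt (Real.binEntropy_strictAntiOn m1 m2 (by linarith))
  · constructor
    · intro heq
      by_contra hne
      have h : |x| < y := lt_of_le_of_ne hxy hne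
      exact absurd heq (ne_of_lt (Real.binEntropy_strictAntiOn m1 m2 (by linarith)))
    · intro h; rw [h]

theorem stmt1 (a b : EuclideanSpace ℝ (Fin 3)) (hb : ‖b‖ = 1) (ha : ‖a‖ ≤ 1) :
    h2 ((1 + ‖a‖) / 2) ≤ h2 ((1 + ⟪b, a⟫) / 2) ∧
    (h2 ((1 + ‖a‖) / 2) = h2 ((1 + ⟪b, a⟫) / 2) ↔ ∃ c : ℝ, a = c • b) := by
  have hcs : |⟪b, a⟫| ≤ ‖a‖ := by
    calc |⟪b, a⟫| ≤ ‖b‖ * ‖a‖ := abs_real_inner_le_norm b a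
    _ = ‖a‖ := by rw [hb, one_mul]
  obtain ⟨hle, hiff⟩ := key ⟪b, a⟫ ‖a‖ hcs ha
  have hlog2 : Real.log 2 > 0 := Real.log_pos (by norm_num)
  rw [h2_eq, h2_eq]
  constructor
  · exact div_le_div_of_nonneg_right hle hlog2.le
  · have hinj : ∀ u v : ℝ, u / Real.log 2 = v / Real.log 2 ↔ u = v := by
      intro u v
      constructor
      · intro h
        have h2 := congrArg (· * Real.log 2) h
        field_simp at h2
        exact h2
      · intro h; rw [h]
    rw [hinj, hiff]
    constructor
    · intro h
      by_cases ha0 : a = 0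
      · exact ⟨0, by simp [ha0]⟩
      · have hb0 : b ≠ 0 := by intro h'; rw [h'] at hb; simp at hb
        have := (norm_inner_eq_norm_iff (𝕜 := ℝ) hb0 ha0).mp
          (by rw [hb, one_mul]; simpa [Real.norm_eq_abs] using h)
        obtain ⟨r, _, hr⟩ := this
        exact ⟨r, hr⟩
    · rintro ⟨c, rfl⟩
      rw [real_inner_smul_right, real_inner_self_eq_norm_mul_norm, hb, norm_smul, hb]
      simp [abs_mul]
end

section
/- For all real numbers u, a, b ∈ [0,1], h₂((1+√(u·a+(1−u)·b))/2) + h₂((1+√((1−u)·a+u·b))/2) ≥ h₂((1+√a)/2) + h₂((1+√b)/2). -/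
/-- Key inequality: `2 * artanh s ≤ 2 s / (1 - s²)` for `0 ≤ s < 1`. -/
lemma key_ineq (s : ℝ) (h0 : 0 ≤ s) (h1 : s < 1) :
    Real.log (1 + s) - Real.log (1 - s) ≤ 2 * s / (1 - s ^ 2) := by
  set k : ℝ → ℝ := fun t => 2 * t / (1 - t ^ 2) - (Real.log (1 + t) - Real.log (1 - t)) with hk
  have hkd : ∀ t ∈ Set.Ico (0:ℝ) 1, HasDerivAt k (4 * t ^ 2 / (1 - t ^ 2) ^ 2) t := by
    intro t ht
    obtain ⟨ht0, ht1⟩ := ht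
    have h1t : (0:ℝ) < 1 + t := by linarith
    have h2t : (0:ℝ) < 1 - t := by linarith
    have hden : (1:ℝ) - t ^ 2 ≠ 0 := by nlinarith
    have d1 : HasDerivAt (fun t : ℝ => 2 * t / (1 - t ^ 2))
        ((2 * (1 - t ^ 2) - 2 * t * (-(2 * t))) / (1 - t ^ 2) ^ 2) t := by
      exact (((hasDerivAt_id t).const_mul 2).div ((hasDerivAt_pow 2 t).const_sub 1) hden).congr_deriv
        (by norm_num)
    have d2 : HasDerivAt (fun t : ℝ => Real.log (1 + t)) ((1 + t)⁻¹ * 1) t :=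
      (Real.hasDerivAt_log h1t.ne').comp t ((hasDerivAt_id t).const_add 1)
    have d3 : HasDerivAt (fun t : ℝ => Real.log (1 - t)) ((1 - t)⁻¹ * (-1)) t :=
      (Real.hasDerivAt_log h2t.ne').comp t ((hasDerivAt_id t).const_sub 1)
    have := d1.sub (d2.sub d3)
    refine this.congr_deriv ?_
    field_simp
    ring
  have hmono : MonotoneOn k (Set.Ico 0 1) := by
    apply monotoneOn_of_hasDerivWithinAt_nonneg (convex_Ico 0 1)
      (f' := fun t => 4 * t ^ 2 / (1 - t ^ 2) ^ 2)
    · exact fun t ht => (hkd t ht).continuousAt.continuousWithinAt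
    · intro t ht
      rw [interior_Ico] at ht
      exact (hkd t ⟨ht.1.le, ht.2⟩).hasDerivWithinAt
    · intro t ht
      positivity
  have h00 : (0:ℝ) ∈ Set.Ico (0:ℝ) 1 := ⟨le_refl 0, one_pos⟩
  have hs : s ∈ Set.Ico (0:ℝ) 1 := ⟨h0, h1⟩
  have := hmono h00 hs h0
  have hk0 : k 0 = 0 := by simp [hk]
  rw [hk0] at this
  simp only [hk] at this
  linarith

/-- Derivative of the (natural-log) entropy kernel. -/
lemma H_hasDerivAt (q : ℝ) (h0 : 0 < q) (h1 : q < 1) :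
    HasDerivAt (fun p : ℝ => -(p * Real.log p) - (1 - p) * Real.log (1 - p))
      (Real.log (1 - q) - Real.log q) q := by
  have hq1 : (0:ℝ) < 1 - q := by linarith
  have d1 : HasDerivAt (fun p : ℝ => p * Real.log p) (1 * Real.log q + q * q⁻¹) q :=
    (hasDerivAt_id q).mul (Real.hasDerivAt_log h0.ne')
  have d2 : HasDerivAt (fun p : ℝ => 1 - p) (-1) q := (hasDerivAt_id q).const_sub 1
  have d3 : HasDerivAt (fun p : ℝ => Real.log (1 - p)) ((1 - q)⁻¹ * (-1)) q :=
    (Real.hasDerivAt_log hq1.ne').comp q d2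
  have d4 : HasDerivAt (fun p : ℝ => (1 - p) * Real.log (1 - p))
      ((-1) * Real.log (1 - q) + (1 - q) * ((1 - q)⁻¹ * (-1))) q := d2.mul d3
  have := d1.neg.sub d4
  refine this.congr_deriv ?_
  field_simp
  ring

lemma h2_eq_s9 (q : ℝ) :
    h2 q = (-(q * Real.log q) - (1 - q) * Real.log (1 - q)) / Real.log 2 := by
  simp only [h2, Real.logb]
  ring

noncomputable def gfun : ℝ → ℝ := fun x => h2 ((1 + Real.sqrt x) / 2)

noncomputable def gder : ℝ → ℝ := fun x =>
  (Real.log (1 - Real.sqrt x) - Real.log (1 + Real.sqrt x)) / (4 * Real.sqrt x * Real.log 2)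

noncomputable def gder2 : ℝ → ℝ := fun x =>
  (((1 - Real.sqrt x)⁻¹ * (-(1 / (2 * Real.sqrt x))) -
      (1 + Real.sqrt x)⁻¹ * (1 / (2 * Real.sqrt x))) * (4 * Real.sqrt x * Real.log 2) -
    (Real.log (1 - Real.sqrt x) - Real.log (1 + Real.sqrt x)) *
      (4 * (1 / (2 * Real.sqrt x)) * Real.log 2)) / (4 * Real.sqrt x * Real.log 2) ^ 2

lemma sqrt_facts {x : ℝ} (hx : x ∈ Set.Ioo (0:ℝ) 1) :
    0 < Real.sqrt x ∧ Real.sqrt x < 1 := by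
  have hs0 : 0 < Real.sqrt x := Real.sqrt_pos.2 hx.1
  have hsq : Real.sqrt x ^ 2 = x := Real.sq_sqrt hx.1.le
  constructor
  · exact hs0
  · nlinarith [hx.2]

lemma gfun_hasDerivAt {x : ℝ} (hx : x ∈ Set.Ioo (0:ℝ) 1) :
    HasDerivAt gfun (gder x) x := by
  obtain ⟨hs0, hs1⟩ := sqrt_facts hx
  set s := Real.sqrt x with hsdef
  have hp0 : (0:ℝ) < (1 + s) / 2 := by linarith
  have hp1 : (1 + s) / 2 < 1 := by linarith
  have hsq : HasDerivAt Real.sqrt (1 / (2 * s)) x := Real.hasDerivAt_sqrt hx.1.ne'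
  have hp : HasDerivAt (fun x : ℝ => (1 + Real.sqrt x) / 2) (1 / (2 * s) / 2) x :=
    (hsq.const_add 1).div_const 2
  have hH := H_hasDerivAt ((1 + s) / 2) hp0 hp1
  have hcomp : HasDerivAt
      (fun x : ℝ => (-(((1 + Real.sqrt x) / 2) * Real.log ((1 + Real.sqrt x) / 2)) -
          (1 - (1 + Real.sqrt x) / 2) * Real.log (1 - (1 + Real.sqrt x) / 2)) / Real.log 2)
      ((Real.log (1 - (1 + s) / 2) - Real.log ((1 + s) / 2)) * (1 / (2 * s) / 2) / Real.log 2)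
      x := by
    simpa [Function.comp] using (hH.comp x hp).div_const (Real.log 2)
  have hfe : gfun = fun x : ℝ =>
      (-(((1 + Real.sqrt x) / 2) * Real.log ((1 + Real.sqrt x) / 2)) -
        (1 - (1 + Real.sqrt x) / 2) * Real.log (1 - (1 + Real.sqrt x) / 2)) / Real.log 2 := by
    funext y
    exact h2_eq_s9 _
  rw [hfe]
  convert hcomp using 1
  have e1 : (1:ℝ) - (1 + s) / 2 = (1 - s) / 2 := by ring
  have hl2 : Real.log 2 ≠ 0 := by
    have := Real.log_pos (by norm_num : (1:ℝ) < 2); linarith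
  have hsne : s ≠ 0 := hs0.ne'
  rw [gder, ← hsdef, e1, Real.log_div (by linarith) two_ne_zero,
    Real.log_div (by linarith) two_ne_zero]
  have e2 : Real.log (1 - s) - Real.log 2 - (Real.log (1 + s) - Real.log 2)
      = Real.log (1 - s) - Real.log (1 + s) := by ring
  rw [e2, div_eq_div_iff (by positivity) hl2]
  field_simp
  ring

lemma gder_hasDerivAt {x : ℝ} (hx : x ∈ Set.Ioo (0:ℝ) 1) :
    HasDerivAt gder (gder2 x) x := by
  obtain ⟨hs0, hs1⟩ := sqrt_facts hx
  set s := Real.sqrt x with hsdef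
  have h1s : (0:ℝ) < 1 - s := by linarith
  have h2s : (0:ℝ) < 1 + s := by linarith
  have hl2 : (0:ℝ) < Real.log 2 := Real.log_pos (by norm_num)
  have hsq : HasDerivAt Real.sqrt (1 / (2 * s)) x := Real.hasDerivAt_sqrt hx.1.ne'
  have dN1 : HasDerivAt (fun x : ℝ => Real.log (1 - Real.sqrt x))
      ((1 - s)⁻¹ * (-(1 / (2 * s)))) x :=
    HasDerivAt.comp (h₂ := Real.log) x (Real.hasDerivAt_log h1s.ne') (hsq.const_sub 1)
  have dN2 : HasDerivAt (fun x : ℝ => Real.log (1 + Real.sqrt x))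
      ((1 + s)⁻¹ * (1 / (2 * s))) x :=
    HasDerivAt.comp (h₂ := Real.log) x (Real.hasDerivAt_log h2s.ne') (hsq.const_add 1)
  have dD : HasDerivAt (fun x : ℝ => 4 * Real.sqrt x * Real.log 2)
      (4 * (1 / (2 * s)) * Real.log 2) x := (hsq.const_mul 4).mul_const (Real.log 2)
  have hDne : 4 * s * Real.log 2 ≠ 0 := by positivity
  exact (dN1.sub dN2).div dD hDne

lemma gder2_nonpos {x : ℝ} (hx : x ∈ Set.Ioo (0:ℝ) 1) : gder2 x ≤ 0 := by
  obtain ⟨hs0, hs1⟩ := sqrt_facts hx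
  set s := Real.sqrt x with hsdef
  have h1s : (0:ℝ) < 1 - s := by linarith
  have h2s : (0:ℝ) < 1 + s := by linarith
  have hl2 : (0:ℝ) < Real.log 2 := Real.log_pos (by norm_num)
  have hden : (1:ℝ) - s ^ 2 ≠ 0 := by nlinarith
  have hkey := key_ineq s hs0.le hs1
  rw [gder2, ← hsdef]
  apply div_nonpos_of_nonpos_of_nonneg _ (by positivity)
  have hnum : ((1 - s)⁻¹ * (-(1 / (2 * s))) - (1 + s)⁻¹ * (1 / (2 * s))) *
        (4 * s * Real.log 2) -
      (Real.log (1 - s) - Real.log (1 + s)) * (4 * (1 / (2 * s)) * Real.log 2) =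
      (2 * Real.log 2 / s) *
        ((Real.log (1 + s) - Real.log (1 - s)) - 2 * s / (1 - s ^ 2)) := by
    field_simp
    ring
  rw [hnum]
  exact mul_nonpos_of_nonneg_of_nonpos (by positivity) (by linarith)

lemma gfun_concave : ConcaveOn ℝ (Set.Icc (0:ℝ) 1) gfun := by
  apply concaveOn_of_hasDerivWithinAt2_nonpos (convex_Icc 0 1) (f' := gder) (f'' := gder2)
  · -- continuity
    have hc : Continuous gfun := by
      have hfe : gfun = fun x : ℝ =>
          (-(((1 + Real.sqrt x) / 2) * Real.log ((1 + Real.sqrt x) / 2)) -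
            (1 - (1 + Real.sqrt x) / 2) * Real.log (1 - (1 + Real.sqrt x) / 2)) /
            Real.log 2 := by
        funext y; exact h2_eq_s9 _
      rw [hfe]
      have hm := Real.continuous_mul_log
      have hp : Continuous (fun x : ℝ => (1 + Real.sqrt x) / 2) :=
        (continuous_const.add Real.continuous_sqrt).div_const 2
      have h1 : Continuous (fun x : ℝ => ((1 + Real.sqrt x) / 2) *
          Real.log ((1 + Real.sqrt x) / 2)) := hm.comp hp
      have h2c : Continuous (fun x : ℝ => (1 - (1 + Real.sqrt x) / 2) *
          Real.log (1 - (1 + Real.sqrt x) / 2)) := hm.comp (continuous_const.sub hp)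
      exact (h1.neg.sub h2c).div_const _
    exact hc.continuousOn
  · intro x hx
    rw [interior_Icc] at hx
    exact (gfun_hasDerivAt hx).hasDerivWithinAt
  · intro x hx
    rw [interior_Icc] at hx
    exact (gder_hasDerivAt hx).hasDerivWithinAt
  · intro x hx
    rw [interior_Icc] at hx
    exact gder2_nonpos hx

theorem stmt9 (u a b : ℝ) (hu : u ∈ Set.Icc (0 : ℝ) 1) (ha : a ∈ Set.Icc (0 : ℝ) 1)
    (hb : b ∈ Set.Icc (0 : ℝ) 1) :
    h2 ((1 + Real.sqrt a) / 2) + h2 ((1 + Real.sqrt b) / 2) ≤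
      h2 ((1 + Real.sqrt (u * a + (1 - u) * b)) / 2) +
        h2 ((1 + Real.sqrt ((1 - u) * a + u * b)) / 2) := by
  have hg := gfun_concave
  have h1 := hg.2 ha hb hu.1 (by linarith [hu.2] : (0:ℝ) ≤ 1 - u) (by ring)
  have h2' := hg.2 ha hb (by linarith [hu.2] : (0:ℝ) ≤ 1 - u) hu.1 (by ring)
  simp only [smul_eq_mul, gfun] at h1 h2'
  linarith
end
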